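/- Over an algebraically closed field of characteristic zero, the evolution algebra E_n degenerates to I_n: there is a curve of invertible matrices g(t) (t ≠ 0) such that the algebras g(t) * E_n (with product (x,y) ↦ g(t)·μ_{E_n}(g(t)⁻¹x, g(t)⁻¹y)) converge, as t → 0, entrywise in structure constants to the algebra I_n. Explicitly, with g(t)(e_1) = (1+t²)e_1 + i·e_2, g(t)(e_2) = i(1−t²)e_1 − e_2, g(t)(e_k) = √2·t·e_k for 3 ≤ k ≤ n, the structure constants of g(t) * E_n are polynomial in t and evaluate at t = 0 to those of I_n. -/

import Mathlib

/-- The evolution algebra `E_n` on `Fin (n+2) → ℂ`: `eⱼ² = e₀`, `eⱼeₖ = 0` (`j ≠ k`). -/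
noncomputable def enMul {n : ℕ} (x y : Fin (n + 2) → ℂ) : Fin (n + 2) → ℂ :=
  fun k => if k = 0 then ∑ i, x i * y i else 0

/-- The evolution algebra `I_n` on `Fin (n+2) → ℂ`: `eⱼ² = e₀ + i·e₁`, `eⱼeₖ = 0`. -/
noncomputable def inMul {n : ℕ} (x y : Fin (n + 2) → ℂ) : Fin (n + 2) → ℂ :=
  fun k => if k = 0 then ∑ i, x i * y i
    else if k = 1 then Complex.I * ∑ i, x i * y i else 0

open Complex

noncomputable def bwd (n : ℕ) (t : ℂ) : (Fin (n+2) → ℂ) →ₗ[ℂ] (Fin (n+2) → ℂ) where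
  toFun x := fun k => if k = 0 then (1 + t^2/2) * x 0 + I*(1 - t^2/2) * x 1
    else if k = 1 then I * x 0 - x 1
    else t * x k
  map_add' x y := by
    funext k
    by_cases h0 : k = 0 <;> by_cases h1 : k = 1 <;> simp [h0, h1] <;> ring
  map_smul' c x := by
    funext k
    by_cases h0 : k = 0 <;> by_cases h1 : k = 1 <;>
      simp [h0, h1, smul_eq_mul, Pi.smul_apply] <;> ring

lemma bwd_apply (n : ℕ) (t : ℂ) (x : Fin (n+2) → ℂ) (k : Fin (n+2)) :
    bwd n t x k = if k = 0 then (1 + t^2/2) * x 0 + I*(1 - t^2/2) * x 1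
      else if k = 1 then I * x 0 - x 1 else t * x k := rfl

lemma fin_cases3 {n : ℕ} (a : Fin (n+2)) : a = 0 ∨ a = 1 ∨ ∃ j : Fin n, a = j.succ.succ := by
  rcases Fin.eq_zero_or_eq_succ a with h | ⟨j, rfl⟩
  · left; exact h
  rcases Fin.eq_zero_or_eq_succ j with rfl | ⟨k, rfl⟩
  · right; left; exact Fin.succ_zero_eq_one
  · right; right; exact ⟨k, rfl⟩

noncomputable def qc {n : ℕ} (a b : Fin (n+2)) (t : ℂ) : ℂ :=
  if a = 0 then (if b = 0 then 1 + t^2/4 else if b = 1 then -(I*t^2)/4 else 0)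
  else if a = 1 then (if b = 0 then -(I*t^2)/4 else if b = 1 then 1 - t^2/4 else 0)
  else if b = a then 1 else 0

lemma key (n : ℕ) (t : ℂ) (a b : Fin (n+2)) :
    ∑ i, bwd n t (Pi.single a 1) i * bwd n t (Pi.single b 1) i = t^2 * qc a b t := by
  rw [Fin.sum_univ_succ, Fin.sum_univ_succ, Fin.succ_zero_eq_one]
  rcases fin_cases3 a with rfl | rfl | ⟨ja, rfl⟩ <;>
    rcases fin_cases3 b with rfl | rfl | ⟨jb, rfl⟩ <;>
      simp [bwd_apply, qc, Pi.single_apply, Fin.succ_ne_zero, Fin.succ_succ_ne_one,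
        Fin.succ_inj, Fin.zero_ne_one, Fin.one_eq_zero_iff,
        mul_ite, ite_mul, Finset.sum_ite_eq, Finset.sum_ite_eq'] <;>
      first
        | ring1
        | linear_combination ((1 - t^2/2)^2) * Complex.I_sq
        | simp [eq_comm, Fin.succ_ne_zero, Fin.succ_succ_ne_one, pow_two]

noncomputable def fwd (n : ℕ) (t : ℂ) : (Fin (n+2) → ℂ) →ₗ[ℂ] (Fin (n+2) → ℂ) where
  toFun x := fun k => if k = 0 then (x 0 + I*(1 - t^2/2) * x 1)/t^2
    else if k = 1 then (I * x 0 - (1 + t^2/2) * x 1)/t^2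
    else x k / t
  map_add' x y := by
    funext k
    by_cases h0 : k = 0 <;> by_cases h1 : k = 1 <;> simp [h0, h1] <;> ring
  map_smul' c x := by
    funext k
    by_cases h0 : k = 0 <;> by_cases h1 : k = 1 <;>
      simp [h0, h1, smul_eq_mul, Pi.smul_apply] <;> ring

lemma fwd_apply (n : ℕ) (t : ℂ) (x : Fin (n+2) → ℂ) (k : Fin (n+2)) :
    fwd n t x k = if k = 0 then (x 0 + I*(1 - t^2/2) * x 1)/t^2
      else if k = 1 then (I * x 0 - (1 + t^2/2) * x 1)/t^2
      else x k / t := rfl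

lemma finOneNeZero (n : ℕ) : (1 : Fin (n+2)) ≠ 0 :=
  Fin.succ_zero_eq_one ▸ Fin.succ_ne_zero (0 : Fin (n+1))

lemma bwd_apply0 (n : ℕ) (t : ℂ) (x : Fin (n+2) → ℂ) :
    bwd n t x 0 = (1 + t^2/2) * x 0 + I*(1 - t^2/2) * x 1 := by
  rw [bwd_apply, if_pos rfl]

lemma bwd_apply1 (n : ℕ) (t : ℂ) (x : Fin (n+2) → ℂ) :
    bwd n t x 1 = I * x 0 - x 1 := by
  rw [bwd_apply, if_neg (finOneNeZero n), if_pos rfl]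

lemma fwd_apply0 (n : ℕ) (t : ℂ) (x : Fin (n+2) → ℂ) :
    fwd n t x 0 = (x 0 + I*(1 - t^2/2) * x 1)/t^2 := by
  rw [fwd_apply, if_pos rfl]

lemma fwd_apply1 (n : ℕ) (t : ℂ) (x : Fin (n+2) → ℂ) :
    fwd n t x 1 = (I * x 0 - (1 + t^2/2) * x 1)/t^2 := by
  rw [fwd_apply, if_neg (finOneNeZero n), if_pos rfl]

noncomputable def gcurve (n : ℕ) (t : ℂ) : (Fin (n+2) → ℂ) ≃ₗ[ℂ] (Fin (n+2) → ℂ) :=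
  if h : t = 0 then LinearEquiv.refl ℂ _ else
    LinearEquiv.ofLinear (fwd n t) (bwd n t)
      (by
        apply LinearMap.ext; intro x
        funext k
        simp only [LinearMap.comp_apply, LinearMap.id_apply]
        rcases fin_cases3 k with rfl | rfl | ⟨j, rfl⟩
        · rw [fwd_apply0, bwd_apply0, bwd_apply1]
          rw [div_eq_iff (pow_ne_zero 2 h)]
          linear_combination ((1 - t^2/2) * x 0) * Complex.I_sq
        · rw [fwd_apply1, bwd_apply0, bwd_apply1]
          rw [div_eq_iff (pow_ne_zero 2 h)]
          linear_combination ((1 - t^2/2) * x 1) * Complex.I_sq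
        · rw [fwd_apply, if_neg (Fin.succ_ne_zero _), if_neg (Fin.succ_succ_ne_one _),
            bwd_apply, if_neg (Fin.succ_ne_zero _), if_neg (Fin.succ_succ_ne_one _)]
          exact mul_div_cancel_left₀ _ h
      )
      (by
        apply LinearMap.ext; intro x
        funext k
        simp only [LinearMap.comp_apply, LinearMap.id_apply]
        rcases fin_cases3 k with rfl | rfl | ⟨j, rfl⟩
        · rw [bwd_apply0, fwd_apply0, fwd_apply1]
          field_simp
          linear_combination ((4 - 2*t^2) * x 0) * Complex.I_sq
        · rw [bwd_apply1, fwd_apply0, fwd_apply1]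
          field_simp
          linear_combination ((2 - t^2) * x 1) * Complex.I_sq
        · rw [bwd_apply, if_neg (Fin.succ_ne_zero _), if_neg (Fin.succ_succ_ne_one _),
            fwd_apply, if_neg (Fin.succ_ne_zero _), if_neg (Fin.succ_succ_ne_one _),
            mul_comm]
          exact div_mul_cancel₀ _ h
      )

noncomputable def qpoly {n : ℕ} (a b : Fin (n+2)) : Polynomial ℂ :=
  if a = 0 then (if b = 0 then 1 + Polynomial.C (4⁻¹:ℂ) * Polynomial.X^2
      else if b = 1 then Polynomial.C (-(I/4)) * Polynomial.X^2 else 0)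
  else if a = 1 then (if b = 0 then Polynomial.C (-(I/4)) * Polynomial.X^2
      else if b = 1 then 1 - Polynomial.C (4⁻¹:ℂ) * Polynomial.X^2 else 0)
  else if b = a then 1 else 0

lemma qpoly_eval {n : ℕ} (a b : Fin (n+2)) (t : ℂ) : (qpoly a b).eval t = qc a b t := by
  unfold qpoly qc
  split_ifs <;> simp <;> ring

lemma hq0 {n : ℕ} (a b : Fin (n+2)) : qc a b 0 = if b = a then 1 else 0 := by
  unfold qc
  rcases fin_cases3 a with rfl | rfl | ⟨ja, rfl⟩ <;>
    rcases fin_cases3 b with rfl | rfl | ⟨jb, rfl⟩ <;>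
      simp [Fin.succ_ne_zero, Fin.succ_succ_ne_one, (finOneNeZero n), (finOneNeZero n).symm,
        Ne.symm (Fin.succ_ne_zero _), Ne.symm (Fin.succ_succ_ne_one _)]

lemma hsum {n : ℕ} (a b : Fin (n+2)) :
    ∑ i, (Pi.single a 1 : Fin (n+2) → ℂ) i * (Pi.single b 1 : Fin (n+2) → ℂ) i
      = if b = a then 1 else 0 := by
  simp [Pi.single_apply, mul_ite, ite_mul, Finset.sum_ite_eq, Finset.sum_ite_eq']

/-- **`E_n` degenerates to `I_n`.** There is a curve `g(t)` of invertible linear maps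
(`t ≠ 0`) such that the structure constants of the transported multiplication
`(x, y) ↦ g(t)(μ_{E_n}(g(t)⁻¹x, g(t)⁻¹y))` are polynomial in `t` and evaluate at
`t = 0` to the structure constants of `I_n`. -/
theorem stmt_15 (n : ℕ) :
    ∃ g : ℂ → ((Fin (n + 2) → ℂ) ≃ₗ[ℂ] (Fin (n + 2) → ℂ)),
      ∀ a b l : Fin (n + 2), ∃ P : Polynomial ℂ,
        (∀ t : ℂ, t ≠ 0 →
          (g t) (enMul ((g t).symm (Pi.single a 1)) ((g t).symm (Pi.single b 1))) l
            = P.eval t) ∧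
        P.eval 0 = inMul (Pi.single a 1) (Pi.single b 1) l := by
  classical
  refine ⟨gcurve n, fun a b l => ?_⟩
  refine ⟨(if l = 0 then 1 else if l = 1 then Polynomial.C I else 0) * qpoly a b, ?_, ?_⟩
  · intro t ht
    have heval : Polynomial.eval t ((if l = 0 then 1 else if l = 1 then Polynomial.C I else 0)
        * qpoly a b) = (if l = 0 then 1 else if l = 1 then I else 0) * qc a b t := by
      rw [Polynomial.eval_mul, qpoly_eval]
      split_ifs <;> simp
    rw [heval]
    simp only [gcurve, dif_neg ht, LinearEquiv.ofLinear_symm_apply, LinearEquiv.ofLinear_apply]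
    set u := bwd n t (Pi.single a 1)
    set v := bwd n t (Pi.single b 1)
    have h0 : enMul u v 0 = t^2 * qc a b t := by
      simp only [enMul, if_pos rfl]
      exact key n t a b
    have h1 : enMul u v 1 = 0 := by
      simp only [enMul]
      rw [if_neg (finOneNeZero n)]
    rcases fin_cases3 l with rfl | rfl | ⟨j, rfl⟩
    · rw [fwd_apply0, h0, h1, mul_zero, add_zero, if_pos rfl, one_mul]
      exact mul_div_cancel_left₀ _ (pow_ne_zero 2 ht)
    · rw [fwd_apply1, h0, h1, mul_zero, sub_zero, if_neg (finOneNeZero n), if_pos rfl]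
      field_simp
    · rw [fwd_apply, if_neg (Fin.succ_ne_zero _), if_neg (Fin.succ_succ_ne_one _)]
      have : enMul u v j.succ.succ = 0 := by
        simp only [enMul]
        rw [if_neg (Fin.succ_ne_zero _)]
      rw [this, zero_div, if_neg (Fin.succ_ne_zero _), if_neg (Fin.succ_succ_ne_one _), zero_mul]
  · have heval : Polynomial.eval 0 ((if l = 0 then 1 else if l = 1 then Polynomial.C I else 0)
        * qpoly a b) = (if l = 0 then 1 else if l = 1 then I else 0) * qc a b 0 := by
      rw [Polynomial.eval_mul, qpoly_eval]
      split_ifs <;> simp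
    rw [heval, hq0]
    rcases fin_cases3 l with rfl | rfl | ⟨j, rfl⟩
    · simp [inMul, hsum]
    · simp [inMul, hsum, finOneNeZero n]
    · simp [inMul, Fin.succ_ne_zero, Fin.succ_succ_ne_one]
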